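/- Let G = PSL(2,7). The set of pairs (x,y) of elements of G with orderOf x = 7, orderOf y = 2 and orderOf (x*y) = 7 is nonempty, and any two such pairs are Aut-equivalent: for any two pairs (x,y), (x',y') with these orders there is a group automorphism α of G such that α x = x' and α y = y'. (Hence there is a unique orientably regular map of type {7,7} with orientation-preserving automorphism group G.) -/

import Mathlib

open Matrix

/-- `PSL(2,7)`: the quotient of `SL(2, ZMod 7)` by its center. -/
abbrev PSL27 : Type := Matrix.ProjectiveSpecialLinearGroup (Fin 2) (ZMod 7)

namespace PSL727aux

abbrev F := ZMod 7
abbrev SL := Matrix.SpecialLinearGroup (Fin 2) F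

instance : Fact (Nat.Prime 7) := ⟨by norm_num⟩
instance : Fact (Even (Fintype.card (Fin 2))) := ⟨by simp⟩

/-! ### tuple model of 2×2 matrices over `ZMod 7` -/

structure T where
  a : F
  b : F
  c : F
  d : F
deriving DecidableEq

def tmul (s t : T) : T :=
  ⟨s.a*t.a + s.b*t.c, s.a*t.b + s.b*t.d, s.c*t.a + s.d*t.c, s.c*t.b + s.d*t.d⟩
def tneg (t : T) : T := ⟨-t.a, -t.b, -t.c, -t.d⟩
def tone : T := ⟨1,0,0,1⟩
def tdet (t : T) : F := t.a*t.d - t.b*t.c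
def p7 (t : T) : T := tmul (tmul (tmul (tmul (tmul (tmul t t) t) t) t) t) t
def tsq (t : T) : T := tmul t t
def tX : T := ⟨1,1,0,1⟩
def tY : T := ⟨0,3,2,0⟩
def txk (k : Fin 7) : T := ⟨1, (k.val : F), 0, 1⟩

def ord7cond (t : T) : Prop :=
  (p7 t = tone ∨ p7 t = tneg tone) ∧ ¬(t = tone ∨ t = tneg tone)

def ord2cond (t : T) : Prop :=
  (tsq t = tone ∨ tsq t = tneg tone) ∧ ¬(t = tone ∨ t = tneg tone)

instance : DecidablePred ord7cond := fun t => by unfold ord7cond; infer_instance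
instance : DecidablePred ord2cond := fun t => by unfold ord2cond; infer_instance

/-- witness conjugator for order-7 elements -/
def wit (t : T) : T :=
  let t' := if p7 t = tone then t else tneg t
  if t'.a - 1 = 0 ∧ t'.c = 0 then ⟨t'.b, 0, t'.d - 1, 1⟩ else ⟨t'.a - 1, 1, t'.c, 0⟩

set_option maxHeartbeats 4000000 in
theorem lemA : ∀ a b c d : F, tdet ⟨a,b,c,d⟩ = 1 → ord7cond ⟨a,b,c,d⟩ →
    tdet (wit ⟨a,b,c,d⟩) ≠ 0 ∧
      (tmul (wit ⟨a,b,c,d⟩) tX = tmul ⟨a,b,c,d⟩ (wit ⟨a,b,c,d⟩) ∨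
       tmul (wit ⟨a,b,c,d⟩) tX = tmul (tneg ⟨a,b,c,d⟩) (wit ⟨a,b,c,d⟩)) := by
  decide

set_option maxHeartbeats 4000000 in
theorem lemB : ∀ a b c d : F, tdet ⟨a,b,c,d⟩ = 1 → ord2cond ⟨a,b,c,d⟩ →
    ord7cond (tmul tX ⟨a,b,c,d⟩) →
    ∃ k : Fin 7, tmul (txk k) tY = tmul ⟨a,b,c,d⟩ (txk k) ∨
                 tmul (txk k) tY = tmul (tneg ⟨a,b,c,d⟩) (txk k) := by
  decide

/-! ### bridge between tuples and matrices -/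

def toM (t : T) : Matrix (Fin 2) (Fin 2) F := !![t.a, t.b; t.c, t.d]

lemma toM_mul (s t : T) : toM (tmul s t) = toM s * toM t := by
  simp [toM, tmul, Matrix.mul_fin_two]

lemma toM_neg (t : T) : toM (tneg t) = -toM t := by
  ext i j
  fin_cases i <;> fin_cases j <;> simp [toM, tneg]

lemma toM_one : toM tone = 1 := by
  simp [toM, tone, Matrix.one_fin_two]

lemma toM_det (t : T) : (toM t).det = tdet t := by
  simp [toM, tdet, Matrix.det_fin_two_of]

lemma toM_inj {s t : T} (h : toM s = toM t) : s = t := by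
  cases s; cases t
  have h00 := congrFun (congrFun h 0) 0
  have h01 := congrFun (congrFun h 0) 1
  have h10 := congrFun (congrFun h 1) 0
  have h11 := congrFun (congrFun h 1) 1
  simp [toM] at h00 h01 h10 h11
  simp_all

lemma toM_p7 (t : T) : toM (p7 t) = toM t ^ 7 := by
  simp only [p7, toM_mul]
  have : toM t ^ 7 = ((((((toM t * toM t) * toM t) * toM t) * toM t) * toM t) * toM t) := by
    norm_num [pow_succ]
  rw [this]

lemma toM_sq (t : T) : toM (tsq t) = toM t ^ 2 := by
  simp only [tsq, toM_mul, pow_two]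

def tOf (A : SL) : T := ⟨A.1 0 0, A.1 0 1, A.1 1 0, A.1 1 1⟩

lemma toM_tOf (A : SL) : toM (tOf A) = A.1 := (Matrix.eta_fin_two A.1).symm

lemma tdet_tOf (A : SL) : tdet (tOf A) = 1 := by
  rw [← toM_det, toM_tOf]; exact A.2

lemma tOf_mul (A B : SL) : tOf (A * B) = tmul (tOf A) (tOf B) :=
  toM_inj (by rw [toM_tOf, toM_mul, toM_tOf, toM_tOf]; rfl)

lemma tOf_neg (A : SL) : tOf (-A) = tneg (tOf A) :=
  toM_inj (by rw [toM_tOf, toM_neg, toM_tOf]; rfl)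

lemma tOf_p7 (A : SL) : tOf (A ^ 7) = p7 (tOf A) :=
  toM_inj (by rw [toM_tOf, toM_p7, toM_tOf]; rfl)

lemma tOf_sq (A : SL) : tOf (A ^ 2) = tsq (tOf A) :=
  toM_inj (by rw [toM_tOf, toM_sq, toM_tOf]; rfl)

lemma tOf_injective : Function.Injective tOf := fun A B h => by
  have : (A : Matrix (Fin 2) (Fin 2) F) = B := by rw [← toM_tOf, h, toM_tOf]
  exact Subtype.ext this

lemma tOf_one : tOf (1 : SL) = tone :=
  toM_inj (by rw [toM_tOf, toM_one]; rfl)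

lemma tOf_eq_one_iff (A : SL) : tOf A = tone ↔ A = 1 :=
  ⟨fun h => tOf_injective (h.trans tOf_one.symm), fun h => h ▸ tOf_one⟩

lemma tOf_negone : tOf (-1 : SL) = tneg tone := by
  rw [tOf_neg, tOf_one]

lemma tOf_eq_negone_iff (A : SL) : tOf A = tneg tone ↔ A = -1 :=
  ⟨fun h => tOf_injective (h.trans tOf_negone.symm), fun h => h ▸ tOf_negone⟩

end PSL727aux

namespace PSL727aux

/-! ### the center of `SL(2,7)` -/

lemma mem_center_iff' (A : SL) :
    A ∈ Subgroup.center SL ↔ A = 1 ∨ A = -1 := by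
  rw [Matrix.SpecialLinearGroup.mem_center_iff]
  constructor
  · rintro ⟨r, hr, hrA⟩
    simp only [Fintype.card_fin] at hr
    have hr' : r = 1 ∨ r = -1 :=
      (by decide : ∀ r : F, r ^ 2 = 1 → r = 1 ∨ r = -1) r hr
    rcases hr' with rfl | rfl
    · left
      apply Subtype.ext
      rw [← hrA]; simp
    · right
      apply Subtype.ext
      rw [← hrA]
      have hd : (Matrix.diagonal fun _ : Fin 2 => (-1:F)) = -1 := by
        ext i j; fin_cases i <;> fin_cases j <;> simp
      simp [Matrix.SpecialLinearGroup.coe_neg, Matrix.scalar_apply, hd]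
  · rintro (rfl | rfl)
    · exact ⟨1, by norm_num, by simp⟩
    · refine ⟨-1, by norm_num, ?_⟩
      have hd : (Matrix.diagonal fun _ : Fin 2 => (-1:F)) = -1 := by
        ext i j; fin_cases i <;> fin_cases j <;> simp
      simp [Matrix.SpecialLinearGroup.coe_neg, Matrix.scalar_apply, hd]

abbrev pr : SL →* PSL27 := QuotientGroup.mk' (Subgroup.center SL)

lemma pr_eq_one_iff (A : SL) : pr A = 1 ↔ A = 1 ∨ A = -1 := by
  rw [QuotientGroup.mk'_apply, QuotientGroup.eq_one_iff, mem_center_iff']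

lemma pr_neg (A : SL) : pr (-A) = pr A := by
  have : (-A : SL) = (-1) * A := by rw [neg_one_mul]
  rw [this, _root_.map_mul, (pr_eq_one_iff (-1)).mpr (Or.inr rfl), one_mul]

/-! ### order conditions via tuples -/

lemma orderOf_pr_eq (p : ℕ) [hp : Fact p.Prime] (A : SL) :
    orderOf (pr A) = p ↔ ((A ^ p = 1 ∨ A ^ p = -1) ∧ ¬(A = 1 ∨ A = -1)) := by
  constructor
  · intro h
    constructor
    · have h1 : (pr A) ^ p = 1 := h ▸ pow_orderOf_eq_one _
      rw [← map_pow, pr_eq_one_iff] at h1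
      exact h1
    · intro hc
      have : pr A = 1 := (pr_eq_one_iff A).mpr hc
      rw [this, orderOf_one] at h
      exact hp.out.ne_one h.symm
  · rintro ⟨h1, h2⟩
    refine orderOf_eq_prime ?_ ?_
    · rw [← map_pow, pr_eq_one_iff]; exact h1
    · rw [Ne, pr_eq_one_iff]; exact h2

lemma ord7_iff (A : SL) : orderOf (pr A) = 7 ↔ ord7cond (tOf A) := by
  rw [orderOf_pr_eq 7 A]
  unfold ord7cond
  rw [← tOf_p7, tOf_eq_one_iff, tOf_eq_negone_iff, tOf_eq_one_iff, tOf_eq_negone_iff]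

lemma ord2_iff (A : SL) : orderOf (pr A) = 2 ↔ ord2cond (tOf A) := by
  rw [orderOf_pr_eq 2 A]
  unfold ord2cond
  rw [← tOf_sq, tOf_eq_one_iff, tOf_eq_negone_iff, tOf_eq_one_iff, tOf_eq_negone_iff]

/-! ### conjugation automorphisms of `PSL27` -/

def cSL (g : (Matrix (Fin 2) (Fin 2) F)ˣ) : SL ≃* SL where
  toFun A := ⟨g.1 * A.1 * (↑g⁻¹ : Matrix (Fin 2) (Fin 2) F), by
    rw [Matrix.det_mul, Matrix.det_mul, A.2, mul_one, ← Matrix.det_mul, Units.mul_inv,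
      Matrix.det_one]⟩
  invFun A := ⟨(↑g⁻¹ : Matrix (Fin 2) (Fin 2) F) * A.1 * g.1, by
    rw [Matrix.det_mul, Matrix.det_mul, A.2, mul_one, ← Matrix.det_mul, Units.inv_mul,
      Matrix.det_one]⟩
  left_inv A := Subtype.ext <| by
    simp only [mul_assoc, Units.inv_mul_cancel_left]
    rw [Units.inv_mul, mul_one]
  right_inv A := Subtype.ext <| by
    simp only [mul_assoc, Units.mul_inv_cancel_left]
    rw [Units.mul_inv, mul_one]
  map_mul' A B := Subtype.ext <| by
    show g.1 * ((A.1 * B.1)) * (↑g⁻¹ : Matrix (Fin 2) (Fin 2) F) = g.1 * A.1 * (↑g⁻¹ : Matrix (Fin 2) (Fin 2) F) * (g.1 * B.1 * (↑g⁻¹ : Matrix (Fin 2) (Fin 2) F))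
    simp only [mul_assoc, Units.inv_mul_cancel_left]

lemma cSL_apply_coe (g : (Matrix (Fin 2) (Fin 2) F)ˣ) (A : SL) :
    (cSL g A : Matrix (Fin 2) (Fin 2) F) = g.1 * A.1 * (↑g⁻¹ : Matrix (Fin 2) (Fin 2) F) := rfl

def ψ (g : (Matrix (Fin 2) (Fin 2) F)ˣ) : PSL27 ≃* PSL27 :=
  QuotientGroup.congr (Subgroup.center SL) (Subgroup.center SL) (cSL g)
    (Subgroup.characteristic_iff_map_eq.mp inferInstance (cSL g))

lemma ψ_pr (g : (Matrix (Fin 2) (Fin 2) F)ˣ) (A : SL) : ψ g (pr A) = pr (cSL g A) :=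
  QuotientGroup.congr_mk' _ _ (cSL g) _ A

end PSL727aux

namespace PSL727aux

def Xs : SL := ⟨!![1,1;0,1], by simp [Matrix.det_fin_two_of]⟩
def Ys : SL := ⟨!![0,3;2,0], by simp [Matrix.det_fin_two_of]; decide⟩

lemma toM_tX : toM tX = (Xs : Matrix (Fin 2) (Fin 2) F) := rfl
lemma toM_tY : toM tY = (Ys : Matrix (Fin 2) (Fin 2) F) := rfl
lemma tOf_Xs : tOf Xs = tX := rfl
lemma tOf_Ys : tOf Ys = tY := rfl

lemma Xs_pow_coe (n : ℕ) :
    ((Xs ^ n : SL) : Matrix (Fin 2) (Fin 2) F) = !![1, (n : F); 0, 1] := by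
  induction n with
  | zero => rw [pow_zero]; show (1 : Matrix (Fin 2) (Fin 2) F) = _; rw [Matrix.one_fin_two]; norm_num
  | succ n ih =>
    rw [pow_succ, Matrix.SpecialLinearGroup.coe_mul, ih]
    show _ * (!![1,1;0,1] : Matrix (Fin 2) (Fin 2) F) = _
    rw [Matrix.mul_fin_two]
    push_cast
    norm_num
    rw [add_comm]

lemma key (x y : PSL27) (h7 : orderOf x = 7) (h2 : orderOf y = 2)
    (h77 : orderOf (x * y) = 7) :
    ∃ α : PSL27 ≃* PSL27, α (pr Xs) = x ∧ α (pr Ys) = y := by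
  obtain ⟨A, rfl⟩ := QuotientGroup.mk'_surjective (Subgroup.center SL) x
  have hA : ord7cond (tOf A) := (ord7_iff A).mp h7
  obtain ⟨hdet, hw⟩ := lemA (tOf A).a (tOf A).b (tOf A).c (tOf A).d (tdet_tOf A) hA
  set w := wit (tOf A) with hwdef
  have hu : IsUnit (toM w) := by
    rw [Matrix.isUnit_iff_isUnit_det, toM_det]
    exact isUnit_iff_ne_zero.mpr hdet
  set g := hu.unit with hgdef
  have hg1 : (g : Matrix (Fin 2) (Fin 2) F) = toM w := hu.unit_spec
  have hC : ∃ C : SL, pr C = pr A ∧ toM w * (Xs : Matrix (Fin 2) (Fin 2) F) =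
      (C : Matrix (Fin 2) (Fin 2) F) * toM w := by
    rcases hw with h | h
    · exact ⟨A, rfl, by
        have := congrArg toM h
        rwa [toM_mul, toM_mul, toM_tX, toM_tOf] at this⟩
    · refine ⟨-A, pr_neg A, ?_⟩
      have := congrArg toM h
      rwa [toM_mul, toM_mul, toM_tX, toM_neg, toM_tOf,
        ← Matrix.SpecialLinearGroup.coe_neg] at this
  obtain ⟨C, hCpr, hCeq⟩ := hC
  have hconj : cSL g Xs = C := by
    apply Subtype.ext
    rw [cSL_apply_coe, hg1, hCeq, mul_assoc, ← hg1, Units.mul_inv, mul_one]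
  have hα₁ : ψ g (pr Xs) = pr A := by rw [ψ_pr, hconj, hCpr]
  set α₁ := ψ g with hα₁def
  set y₁ := α₁.symm y with hy₁
  have hy : α₁ y₁ = y := α₁.apply_symm_apply y
  obtain ⟨B, hB⟩ := QuotientGroup.mk'_surjective (Subgroup.center SL) y₁
  have hB2 : orderOf (pr B) = 2 := by
    rw [show pr B = y₁ from hB, hy₁, α₁.symm.orderOf_eq y, h2]
  have hXB : orderOf (pr (Xs * B)) = 7 := by
    rw [_root_.map_mul, show pr B = y₁ from hB]
    rw [← α₁.orderOf_eq (pr Xs * y₁), _root_.map_mul, hα₁, hy, h77]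
  have hXB' : ord7cond (tmul tX (tOf B)) := by
    have := (ord7_iff (Xs * B)).mp hXB
    rwa [tOf_mul, tOf_Xs] at this
  obtain ⟨k, hk⟩ := lemB (tOf B).a (tOf B).b (tOf B).c (tOf B).d (tdet_tOf B)
    ((ord2_iff B).mp hB2) hXB'
  have hxk : toM (txk k) = ((Xs ^ k.val : SL) : Matrix (Fin 2) (Fin 2) F) := by
    rw [Xs_pow_coe]; rfl
  have hD : ∃ D : SL, pr D = pr B ∧ Xs ^ k.val * Ys = D * Xs ^ k.val := by
    rcases hk with h | h
    · refine ⟨B, rfl, Subtype.ext ?_⟩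
      have := congrArg toM h
      rwa [toM_mul, toM_mul, toM_tY, toM_tOf, hxk,
        ← Matrix.SpecialLinearGroup.coe_mul, ← Matrix.SpecialLinearGroup.coe_mul] at this
    · refine ⟨-B, pr_neg B, Subtype.ext ?_⟩
      have := congrArg toM h
      rwa [toM_mul, toM_mul, toM_tY, toM_neg, toM_tOf, hxk,
        ← Matrix.SpecialLinearGroup.coe_neg,
        ← Matrix.SpecialLinearGroup.coe_mul, ← Matrix.SpecialLinearGroup.coe_mul] at this
  obtain ⟨D, hDpr, hDeq⟩ := hD
  have hslD : Xs ^ k.val * Ys * (Xs ^ k.val)⁻¹ = D := by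
    rw [mul_inv_eq_iff_eq_mul, hDeq]
  set z := pr Xs ^ k.val with hzdef
  have hz : z = pr (Xs ^ k.val) := (map_pow pr Xs k.val).symm
  have hconj2 : (MulAut.conj z) (pr Ys) = pr B := by
    rw [MulAut.conj_apply, hz, ← map_inv, ← _root_.map_mul, ← _root_.map_mul, hslD, hDpr]
  have hconjX : (MulAut.conj z) (pr Xs) = pr Xs := by
    rw [MulAut.conj_apply, hzdef]
    have hcomm : pr Xs ^ k.val * pr Xs = pr Xs * pr Xs ^ k.val :=
      ((Commute.refl (pr Xs)).pow_left k.val).eq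
    rw [hcomm, mul_assoc, mul_inv_cancel, mul_one]
  refine ⟨(MulAut.conj z : PSL27 ≃* PSL27).trans α₁, ?_, ?_⟩
  · show α₁ ((MulAut.conj z) (pr Xs)) = _
    rw [hconjX, hα₁]
  · show α₁ ((MulAut.conj z) (pr Ys)) = y
    rw [hconj2, show pr B = y₁ from hB, hy]

lemma e7 : orderOf (pr Xs) = 7 := (ord7_iff Xs).mpr (by rw [tOf_Xs]; decide)
lemma e2 : orderOf (pr Ys) = 2 := (ord2_iff Ys).mpr (by rw [tOf_Ys]; decide)
lemma e77 : orderOf (pr Xs * pr Ys) = 7 := by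
  rw [← _root_.map_mul]
  refine (ord7_iff (Xs * Ys)).mpr ?_
  rw [tOf_mul, tOf_Xs, tOf_Ys]
  decide

end PSL727aux

open PSL727aux in
/-- There is a pair `(x, y)` in `PSL(2,7)` of type `(7,2,7)`, and any two such pairs
are equivalent under an automorphism of the group. -/
theorem psl27_727_pairs_nonempty_and_aut_transitive :
    (∃ x y : PSL27, orderOf x = 7 ∧ orderOf y = 2 ∧ orderOf (x * y) = 7) ∧
    (∀ x y x' y' : PSL27,
      orderOf x = 7 → orderOf y = 2 → orderOf (x * y) = 7 →
      orderOf x' = 7 → orderOf y' = 2 → orderOf (x' * y') = 7 →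
      ∃ α : PSL27 ≃* PSL27, α x = x' ∧ α y = y') := by
  constructor
  · exact ⟨pr Xs, pr Ys, e7, e2, e77⟩
  · intro x y x' y' h1 h2 h3 h1' h2' h3'
    obtain ⟨α, hαX, hαY⟩ := key x y h1 h2 h3
    obtain ⟨α', hαX', hαY'⟩ := key x' y' h1' h2' h3'
    refine ⟨α.symm.trans α', ?_, ?_⟩
    · show α' (α.symm x) = x'
      rw [← hαX, α.symm_apply_apply, hαX']
    · show α' (α.symm y) = y'
      rw [← hαY, α.symm_apply_apply, hαY']
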